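/- Define F(k,h) = ζ(k+h) - ζ(k) - ζ(h) with ζ(u) = 1/u (rational case). Then for complex numbers k₁, h₁, k, h (all relevant arguments nonzero), setting x₁ = F(k₁,h₁), x₂ = F(k,h), x₃ = F(-h₁-k, -k₁-h), y₁ = F(k₁,h), y₂ = F(k,h₁), y₃ = F(-h-k, -k₁-h₁), the equalities x₁+x₂+x₃ = y₁+y₂+y₃ and x₁²+x₂²+x₃² = y₁²+y₂²+y₃² hold. -/

import Mathlib

/-- The rational F_IV substitution F(k,h) = ζ(k+h) - ζ(k) - ζ(h) with ζ(u) = 1/u. -/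
noncomputable def Frat (k h : ℂ) : ℂ := 1 / (k + h) - 1 / k - 1 / h

set_option maxHeartbeats 2000000 in
theorem FIV_rational_solution (k₁ h₁ k h : ℂ)
    (hk₁ : k₁ ≠ 0) (hh₁ : h₁ ≠ 0) (hk : k ≠ 0) (hh : h ≠ 0)
    (h1 : k₁ + h₁ ≠ 0) (h2 : k + h ≠ 0) (h3 : k₁ + h ≠ 0) (h4 : k + h₁ ≠ 0)
    (h5 : -h₁ - k ≠ 0) (h6 : -k₁ - h ≠ 0) (h7 : -h₁ - k + (-k₁ - h) ≠ 0)
    (h8 : -h - k ≠ 0) (h9 : -k₁ - h₁ ≠ 0) (h10 : -h - k + (-k₁ - h₁) ≠ 0) :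
    Frat k₁ h₁ + Frat k h + Frat (-h₁ - k) (-k₁ - h)
        = Frat k₁ h + Frat k h₁ + Frat (-h - k) (-k₁ - h₁) ∧
      (Frat k₁ h₁) ^ 2 + (Frat k h) ^ 2 + (Frat (-h₁ - k) (-k₁ - h)) ^ 2
        = (Frat k₁ h) ^ 2 + (Frat k h₁) ^ 2 + (Frat (-h - k) (-k₁ - h₁)) ^ 2 := by
  have e5 : -h₁ - k = -(k + h₁) := by ring
  have e6 : -k₁ - h = -(k₁ + h) := by ring
  have e8 : -h - k = -(k + h) := by ring
  have e9 : -k₁ - h₁ = -(k₁ + h₁) := by ring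
  have e7 : -h₁ - k + (-k₁ - h) = -(k₁ + h₁ + k + h) := by ring
  have e10 : -h - k + (-k₁ - h₁) = -(k₁ + h₁ + k + h) := by ring
  have hS : k₁ + h₁ + k + h ≠ 0 := by intro c; apply h7; rw [e7, c, neg_zero]
  constructor <;> (unfold Frat; rw [e7, e10, e5, e6, e8, e9]; field_simp; ring)
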